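/- For an odd prime p, any M ≥ 1, and any k with 1 ≤ k ≤ p-1, the number of partitions into exactly k parts each of size at most Mp of a number congruent to i mod p is the same for all residues i mod p. -/

import Mathlib

/-- The number of partitions into exactly k parts, each of size at least 1 and at
most L, of a number congruent to i mod p. -/
def exactPartCount (k L p i : ℕ) : ℕ :=
  ((Finset.univ : Finset (Fin k → Fin (L + 1))).filter
    (fun f => (∀ a b : Fin k, a ≤ b → (f b : ℕ) ≤ (f a : ℕ)) ∧
      (∀ a, 0 < (f a : ℕ)) ∧ (∑ a, (f a : ℕ)) % p = i)).card

lemma ofFn_val_eq {α : Type*} (k : ℕ) (v : Fin k → α) :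
    Multiset.map v (Finset.univ : Finset (Fin k)).val = ↑(List.ofFn v) := by
  have : (Finset.univ : Finset (Fin k)).val = ↑(List.finRange k) := rfl
  rw [this, Multiset.map_coe, ← List.ofFn_eq_map]

lemma count_eq_sym (k L p i : ℕ) :
    exactPartCount k L p i =
      (((Finset.Icc 1 L).sym k).filter
        (fun m : Sym ℕ k => (↑m : Multiset ℕ).sum % p = i)).card := by
  classical
  apply Finset.card_bij (fun f _ => (⟨Multiset.map (fun a => (f a : ℕ)) Finset.univ.val, by
    simp⟩ : Sym ℕ k))
  · -- maps to target
    intro f hf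
    simp only [Finset.mem_filter, Finset.mem_univ, true_and] at hf
    obtain ⟨hmono, hpos, hsum⟩ := hf
    refine Finset.mem_filter.2 ⟨Finset.mem_sym_iff.2 ?_, ?_⟩
    · intro a ha
      simp only [Sym.mem_mk, Multiset.mem_map] at ha
      obtain ⟨b, -, rfl⟩ := ha
      exact Finset.mem_Icc.2 ⟨hpos b, Nat.lt_succ_iff.1 (f b).isLt⟩
    · exact hsum
  · -- injective
    intro f hf g hg hfg
    have h1 : Multiset.map (fun a => (f a : ℕ)) Finset.univ.val
        = Multiset.map (fun a => (g a : ℕ)) Finset.univ.val :=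
      congrArg Subtype.val hfg
    rw [ofFn_val_eq k _, ofFn_val_eq k _, Multiset.coe_eq_coe] at h1
    simp only [Finset.mem_filter, Finset.mem_univ, true_and] at hf hg
    have hsf : List.Pairwise (· ≥ ·) (List.ofFn (fun a => (f a : ℕ))) := by
      rw [List.pairwise_ofFn]
      exact fun a b hab => hf.1 a b (le_of_lt hab)
    have hsg : List.Pairwise (· ≥ ·) (List.ofFn (fun a => (g a : ℕ))) := by
      rw [List.pairwise_ofFn]
      exact fun a b hab => hg.1 a b (le_of_lt hab)
    have heq := List.Perm.eq_of_pairwise' hsf hsg h1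
    rw [List.ofFn_inj] at heq
    funext a
    exact Fin.val_injective (congrFun heq a)
  · -- surjective
    intro m hm
    replace hm := Finset.mem_filter.1 hm
    obtain ⟨hmem, hsum⟩ := hm
    set l : List ℕ := Multiset.sort (m : Multiset ℕ) (· ≥ ·) with hl
    have hlen : l.length = k := by
      rw [hl, Multiset.length_sort]; exact m.prop
    have hcoe : (↑l : Multiset ℕ) = (m : Multiset ℕ) := Multiset.sort_eq _ _
    have hsorted : List.Pairwise (· ≥ ·) l := Multiset.pairwise_sort _ _
    have hbd : ∀ x ∈ l, x ∈ Finset.Icc 1 L := by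
      intro x hx
      have hx2 : x ∈ (↑l : Multiset ℕ) := by exact_mod_cast hx
      rw [hcoe] at hx2
      exact Finset.mem_sym_iff.1 hmem x (Sym.mem_coe.mp hx2)
    have hbd' : ∀ a : Fin k, 1 ≤ l.get (Fin.cast hlen.symm a) ∧
        l.get (Fin.cast hlen.symm a) ≤ L := by
      intro a
      have := hbd _ (l.get_mem (Fin.cast hlen.symm a))
      rw [Finset.mem_Icc] at this
      exact this
    refine ⟨fun a => ⟨l.get (Fin.cast hlen.symm a), Nat.lt_succ_of_le (hbd' a).2⟩, ?_, ?_⟩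
    · have hofn : List.ofFn (fun a : Fin k => l.get (Fin.cast hlen.symm a)) = l := by
        apply List.ext_get (by simp [hlen])
        intro n h1 h2
        simp [List.get_ofFn, Fin.cast]
      refine Finset.mem_filter.2 ⟨Finset.mem_univ _, ?_, ?_, ?_⟩
      · intro a b hab
        rcases eq_or_lt_of_le hab with h | h
        · subst h; exact le_refl _
        · refine List.Pairwise.rel_get_of_lt hsorted ?_
          simp only [Fin.lt_def, Fin.coe_cast]
          exact h
      · exact fun a => (hbd' a).1
      · show (∑ a : Fin k, l.get (Fin.cast hlen.symm a)) % p = i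
        have : (∑ a : Fin k, l.get (Fin.cast hlen.symm a)) = (m : Multiset ℕ).sum := by
          have h2 : (∑ a : Fin k, l.get (Fin.cast hlen.symm a))
              = (Multiset.map (fun a : Fin k => l.get (Fin.cast hlen.symm a))
                  (Finset.univ : Finset (Fin k)).val).sum := rfl
          rw [h2, ofFn_val_eq k _, hofn, hcoe]
        rw [this]; exact hsum
    · apply Subtype.ext
      show Multiset.map (fun a : Fin k => l.get (Fin.cast hlen.symm a)) Finset.univ.val
        = (m : Multiset ℕ)
      have hofn : List.ofFn (fun a : Fin k => l.get (Fin.cast hlen.symm a)) = l := by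
        apply List.ext_get (by simp [hlen])
        intro n h1 h2
        simp [List.get_ofFn, Fin.cast]
      calc Multiset.map (fun a : Fin k => l.get (Fin.cast hlen.symm a)) Finset.univ.val
          = ↑(List.ofFn (fun a : Fin k => l.get (Fin.cast hlen.symm a))) := ofFn_val_eq k _
        _ = ↑l := by rw [hofn]
        _ = (m : Multiset ℕ) := hcoe


/-- cyclic shift by `c` on `[1, L]`. -/
def shf (L c x : ℕ) : ℕ := (x - 1 + c) % L + 1

lemma shf_mem {L : ℕ} (hL : 0 < L) (c : ℕ) {x : ℕ} (hx : x ∈ Finset.Icc 1 L) :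
    shf L c x ∈ Finset.Icc 1 L := by
  have := Nat.mod_lt (x - 1 + c) hL
  simp only [Finset.mem_Icc] at *
  unfold shf
  omega

lemma shf_shf {L : ℕ} (hL : 0 < L) {c1 c2 : ℕ} (hcc : (c1 + c2) % L = 0)
    {x : ℕ} (hx : x ∈ Finset.Icc 1 L) : shf L c2 (shf L c1 x) = x := by
  rw [Finset.mem_Icc] at hx
  obtain ⟨t, ht⟩ := Nat.dvd_of_mod_eq_zero hcc
  unfold shf
  have h1 : (x - 1 + c1) % L + 1 - 1 + c2 = (x - 1 + c1) % L + c2 := by omega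
  rw [h1, Nat.mod_add_mod]
  have h2 : x - 1 + c1 + c2 = (x - 1) + L * t := by omega
  rw [h2, Nat.add_mul_mod_self_left, Nat.mod_eq_of_lt (by omega)]
  omega

lemma shf_cancel {L c : ℕ} (hL : 0 < L) : (c + (L - c % L)) % L = 0 := by
  obtain ⟨t, ht⟩ := Nat.dvd_sub_mod (n := L) c
  have h2 := Nat.mod_lt c hL
  have h4 : c % L ≤ c := Nat.mod_le c L
  have h3 : c + (L - c % L) = L * (t + 1) := by rw [Nat.mul_add, ← ht]; omega
  rw [h3, Nat.mul_mod_right]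

lemma shf_cast {p M : ℕ} (c : ℕ) {x : ℕ} (hx : 1 ≤ x) :
    ((shf (M * p) c x : ℕ) : ZMod p) = (x : ZMod p) + c := by
  have h1 : (x - 1 + c) % (M * p) % p = (x - 1 + c) % p :=
    Nat.mod_mod_of_dvd _ (dvd_mul_left p M)
  have h2 : shf (M * p) c x % p = (x + c) % p := by
    unfold shf
    calc ((x - 1 + c) % (M * p) + 1) % p = ((x - 1 + c) + 1) % p := by
            rw [Nat.add_mod, h1, ← Nat.add_mod]
      _ = (x + c) % p := by congr 1; omega
  have h3 : (shf (M * p) c x : ZMod p) = ((x + c : ℕ) : ZMod p) :=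
    (ZMod.natCast_eq_natCast_iff _ _ _).2 h2
  rw [h3]; push_cast; ring

lemma shf_sum {p M : ℕ} (c : ℕ) (S : Multiset ℕ) (hS : ∀ x ∈ S, 1 ≤ x) :
    (((S.map (shf (M * p) c)).sum : ℕ) : ZMod p)
      = (S.sum : ZMod p) + (Multiset.card S) * c := by
  induction S using Multiset.induction_on with
  | empty => simp
  | cons a S ih =>
    have ha : 1 ≤ a := hS a (Multiset.mem_cons_self a S)
    have hS' : ∀ x ∈ S, 1 ≤ x := fun x hx => hS x (Multiset.mem_cons_of_mem hx)
    rw [Multiset.map_cons, Multiset.sum_cons, Multiset.sum_cons, Multiset.card_cons]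
    rw [Nat.cast_add, Nat.cast_add, ih hS', shf_cast c ha]
    push_cast
    ring

lemma mod_eq_iff_cast {p a i : ℕ} (hi : i < p) :
    a % p = i ↔ (a : ZMod p) = (i : ZMod p) := by
  rw [ZMod.natCast_eq_natCast_iff, Nat.ModEq, Nat.mod_eq_of_lt hi]

lemma card_shift (p M k : ℕ) (hp : 0 < p) (hM : 1 ≤ M) (c i j : ℕ)
    (hij : (j : ZMod p) = (i : ZMod p) + (k : ZMod p) * c) (hi : i < p) (hj : j < p) :
    (((Finset.Icc 1 (M * p)).sym k).filter
        (fun m : Sym ℕ k => (↑m : Multiset ℕ).sum % p = i)).card =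
    (((Finset.Icc 1 (M * p)).sym k).filter
        (fun m : Sym ℕ k => (↑m : Multiset ℕ).sum % p = j)).card := by
  classical
  set L := M * p with hLdef
  have hL : 0 < L := Nat.mul_pos hM hp
  set c' := L - c % L with hc'def
  have hcc : (c + c') % L = 0 := shf_cancel hL
  have hcc' : (c' + c) % L = 0 := by rwa [Nat.add_comm]
  -- cast of c' is -c
  have hc'cast : (c' : ZMod p) = -(c : ZMod p) := by
    have hdvd : p ∣ c + c' := dvd_trans (dvd_mul_left p M) (Nat.dvd_of_mod_eq_zero hcc)
    have : ((c + c' : ℕ) : ZMod p) = 0 := (ZMod.natCast_eq_zero_iff _ _).2 hdvd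
    push_cast at this
    linear_combination this
  have hones : ∀ (m : Sym ℕ k), m ∈ (Finset.Icc 1 L).sym k → ∀ x ∈ (m : Multiset ℕ), 1 ≤ x := by
    intro m hm x hx
    exact (Finset.mem_Icc.1 (Finset.mem_sym_iff.1 hm x (Sym.mem_coe.mp hx))).1
  apply Finset.card_bij (fun m _ => Sym.map (shf L c) m)
  · intro m hm
    simp only [Finset.mem_filter] at hm ⊢
    obtain ⟨hmem, hsum⟩ := hm
    constructor
    · rw [Finset.mem_sym_iff]
      intro a ha
      rw [Sym.mem_map] at ha
      obtain ⟨x, hx, rfl⟩ := ha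
      exact shf_mem hL c (Finset.mem_sym_iff.1 hmem x hx)
    · rw [mod_eq_iff_cast hj]
      rw [Sym.coe_map]
      rw [shf_sum c _ (hones m hmem), Sym.card_coe]
      rw [mod_eq_iff_cast hi] at hsum
      rw [hsum, hij]
  · -- injective
    intro m1 hm1 m2 hm2 heq
    have h1 : Multiset.map (shf L c) (m1 : Multiset ℕ) = Multiset.map (shf L c) (m2 : Multiset ℕ) := by
      have := congrArg Sym.toMultiset heq
      rwa [Sym.coe_map, Sym.coe_map] at this
    have h2 := congrArg (Multiset.map (shf L c')) h1
    rw [Multiset.map_map, Multiset.map_map] at h2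
    have key : ∀ (m : Sym ℕ k), m ∈ (Finset.Icc 1 L).sym k →
        Multiset.map (shf L c' ∘ shf L c) (m : Multiset ℕ) = (m : Multiset ℕ) := by
      intro m hm
      have h : ∀ x ∈ (m : Multiset ℕ), (shf L c' ∘ shf L c) x = id x := fun x hx =>
        shf_shf hL hcc (Finset.mem_sym_iff.1 hm x (Sym.mem_coe.mp hx))
      rw [Multiset.map_congr rfl h, Multiset.map_id]
    apply Sym.coe_injective
    calc (m1 : Multiset ℕ)
        = Multiset.map (shf L c' ∘ shf L c) (m1 : Multiset ℕ) :=
          (key m1 (Finset.mem_filter.1 hm1).1).symm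
      _ = Multiset.map (shf L c' ∘ shf L c) (m2 : Multiset ℕ) := h2
      _ = (m2 : Multiset ℕ) := key m2 (Finset.mem_filter.1 hm2).1
  · -- surjective
    intro m' hm'
    simp only [Finset.mem_filter] at hm'
    obtain ⟨hmem', hsum'⟩ := hm'
    have hmem : Sym.map (shf L c') m' ∈ (Finset.Icc 1 L).sym k := by
      rw [Finset.mem_sym_iff]
      intro a ha
      rw [Sym.mem_map] at ha
      obtain ⟨x, hx, rfl⟩ := ha
      exact shf_mem hL c' (Finset.mem_sym_iff.1 hmem' x hx)
    refine ⟨Sym.map (shf L c') m', Finset.mem_filter.2 ⟨hmem, ?_⟩, ?_⟩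
    · rw [mod_eq_iff_cast hi, Sym.coe_map, shf_sum c' _ (hones m' hmem'), Sym.card_coe]
      rw [mod_eq_iff_cast hj] at hsum'
      rw [hsum', hij, hc'cast]
      ring
    · apply Sym.coe_injective
      rw [Sym.coe_map, Sym.coe_map, Multiset.map_map]
      have h : ∀ x ∈ (m' : Multiset ℕ), (shf L c ∘ shf L c') x = id x := fun x hx =>
        shf_shf hL hcc' (Finset.mem_sym_iff.1 hmem' x (Sym.mem_coe.mp hx))
      rw [Multiset.map_congr rfl h, Multiset.map_id]


/-- For an odd prime p, M ≥ 1 and 1 ≤ k ≤ p-1, the partitions into exactly k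
parts each at most Mp are equidistributed over residues of their size mod p. -/
theorem exactPartCount_Mp_eq (p M k : ℕ) (hp : p.Prime) (hodd : Odd p)
    (hM : 1 ≤ M) (h1 : 1 ≤ k) (hk : k ≤ p - 1) (i j : ℕ) (hi : i < p) (hj : j < p) :
    exactPartCount k (M * p) p i = exactPartCount k (M * p) p j := by
  haveI := Fact.mk hp
  have hp0 : 0 < p := hp.pos
  have hk0 : (k : ZMod p) ≠ 0 := by
    intro h
    have hd := (ZMod.natCast_eq_zero_iff k p).1 h
    have := Nat.le_of_dvd (by omega) hd
    omega
  set u : ZMod p := ((j : ZMod p) - (i : ZMod p)) * (k : ZMod p)⁻¹ with hu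
  have hc : ((u.val : ℕ) : ZMod p) = u := by rw [ZMod.natCast_val, ZMod.cast_id]
  have hku : (k : ZMod p) * u = (j : ZMod p) - (i : ZMod p) := by
    rw [hu, mul_comm, mul_assoc, inv_mul_cancel₀ hk0, mul_one]
  have hij : (j : ZMod p) = (i : ZMod p) + (k : ZMod p) * ((u.val : ℕ) : ZMod p) := by
    rw [hc, hku]; ring
  rw [count_eq_sym, count_eq_sym]
  exact card_shift p M k hp0 hM u.val i j hij hi hj
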